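/- Let N be a positive integer and define, for integers n ≥ 0, u_n(t) = (N(N+1) − n(n+1))/cosh²(t) and b_n(t) = −2(n+1)·tanh(t), together with b_{−1}(t) = 0. Then these functions satisfy the Toda chain equations b_n' = u_{n+1} − u_n for n ≥ 0 and u_n' = u_n(b_n − b_{n−1}) for n ≥ 0, for all real t; moreover u_N ≡ 0. -/

import Mathlib

lemma my_hasDerivAt_tanh (t : ℝ) :
    HasDerivAt Real.tanh (1 / Real.cosh t ^ 2) t := by
  have hc : Real.cosh t ≠ 0 := ne_of_gt (Real.cosh_pos t)
  have h := (Real.hasDerivAt_sinh t).div (Real.hasDerivAt_cosh t) hc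
  have heq : (Real.cosh t * Real.cosh t - Real.sinh t * Real.sinh t) / Real.cosh t ^ 2
      = 1 / Real.cosh t ^ 2 := by
    have := Real.cosh_sq_sub_sinh_sq t
    rw [show Real.cosh t * Real.cosh t - Real.sinh t * Real.sinh t
      = Real.cosh t ^ 2 - Real.sinh t ^ 2 by ring, this]
  rw [heq] at h
  have : Real.tanh = fun t => Real.sinh t / Real.cosh t := by
    funext s; exact Real.tanh_eq_sinh_div_cosh s
  rw [this]
  exact h

lemma my_hasDerivAt_invcosh (c t : ℝ) :
    HasDerivAt (fun s => c / Real.cosh s ^ 2)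
      ((c / Real.cosh t ^ 2) * (-2 * Real.tanh t)) t := by
  have hc : Real.cosh t ≠ 0 := ne_of_gt (Real.cosh_pos t)
  have hc2 : Real.cosh t ^ 2 ≠ 0 := pow_ne_zero _ hc
  have hd : HasDerivAt (fun s => Real.cosh s ^ 2) (2 * Real.cosh t ^ 1 * Real.sinh t) t :=
    (Real.hasDerivAt_cosh t).pow 2
  have h := (hasDerivAt_const t c).div hd hc2
  refine h.congr_deriv ?_
  rw [Real.tanh_eq_sinh_div_cosh]
  field_simp
  ring

/-- The functions `uₙ(t) = (N(N+1) - n(n+1))/cosh²t`,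
`bₙ(t) = -2(n+1)tanh t` (for `n ≥ 0`) together with `b₋₁ = 0` satisfy the Toda
chain equations `bₙ' = u_{n+1} - uₙ` and `uₙ' = uₙ(bₙ - b_{n-1})` for all `n ≥ 0`
and all real `t`; moreover `u_N ≡ 0`. -/
theorem soliton_toda_solution
    (N : ℕ) (hN : 0 < N) (u : ℕ → ℝ → ℝ) (b : ℤ → ℝ → ℝ)
    (hu : ∀ n : ℕ, ∀ t : ℝ,
      u n t = ((N : ℝ) * ((N : ℝ) + 1) - (n : ℝ) * ((n : ℝ) + 1)) / Real.cosh t ^ 2)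
    (hb : ∀ n : ℤ, 0 ≤ n → ∀ t : ℝ, b n t = -2 * ((n : ℝ) + 1) * Real.tanh t)
    (hbm1 : ∀ t : ℝ, b (-1) t = 0) :
    (∀ n : ℕ, ∀ t : ℝ, HasDerivAt (b (n : ℤ)) (u (n + 1) t - u n t) t) ∧
    (∀ n : ℕ, ∀ t : ℝ,
      HasDerivAt (u n) (u n t * (b (n : ℤ) t - b ((n : ℤ) - 1) t)) t) ∧
    (∀ t : ℝ, u N t = 0) := by
  refine ⟨?_, ?_, ?_⟩
  · intro n t
    have hfun : b (n : ℤ) = fun s => -2 * ((n : ℝ) + 1) * Real.tanh s := by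
      funext s
      rw [hb (n : ℤ) (Int.ofNat_nonneg n) s]
      push_cast; ring_nf
    rw [hfun, hu, hu]
    have h := (my_hasDerivAt_tanh t).const_mul (-2 * ((n : ℝ) + 1))
    refine h.congr_deriv ?_
    push_cast
    field_simp
    ring
  · intro n t
    have hfun : u n = fun s =>
        ((N : ℝ) * ((N : ℝ) + 1) - (n : ℝ) * ((n : ℝ) + 1)) / Real.cosh s ^ 2 := by
      funext s; exact hu n s
    have hdiff : b (n : ℤ) t - b ((n : ℤ) - 1) t = -2 * Real.tanh t := by
      cases n with
      | zero =>
        simp only [Nat.cast_zero]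
        rw [show (0 : ℤ) - 1 = -1 by ring, hbm1, hb 0 le_rfl]
        norm_num
      | succ m =>
        rw [hb _ (by positivity), hb _ (by omega)]
        push_cast; ring
    rw [hfun, hdiff]
    exact my_hasDerivAt_invcosh _ t
  · intro t
    rw [hu]
    simp
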